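/- arXiv:2004.02917 — 3 statements merged into one kernel-verified Lean document; each statement's English description precedes it below -/
import Mathlib

section
/- For every u ∈ H¹(S¹, ℝ) and every δ ∈ ℝ, the integral over S¹ of u'(x)·(−Δ)^{1/2}u(x)·sin(x−δ) dx equals 0. -/
open MeasureTheory Set

/-- The `k`-th Fourier coefficient `(1/2π) ∫₀^{2π} u(x) e^{-ikx} dx` of a
`2π`-periodic function `u : ℝ → ℝ`. -/
noncomputable def fourierCoeffP (u : ℝ → ℝ) (k : ℤ) : ℂ :=
  (1 / (2 * Real.pi)) *
    ∫ x in (0:ℝ)..(2 * Real.pi), (u x : ℂ) * Complex.exp (-(Complex.I) * (k : ℂ) * (x : ℂ))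

namespace HalfLapAux

open Complex Function

instance fact_two_pi_pos : Fact ((0:ℝ) < 2 * Real.pi) := ⟨by positivity⟩

lemma fourier_neg_coe (k : ℤ) (x : ℝ) :
    (fourier (-k) (x : AddCircle (2 * Real.pi)) : ℂ) = Complex.exp (-(Complex.I) * k * x) := by
  rw [fourier_coe_apply]
  congr 1
  have h2 : ((2 * Real.pi : ℝ) : ℂ) ≠ 0 := by
    simp [Real.pi_ne_zero]
  push_cast
  push_cast at h2
  field_simp

lemma fourierCoeff_lift (f : ℝ → ℝ) (hper : Periodic (fun x => (f x : ℂ)) (2 * Real.pi)) (k : ℤ) :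
    fourierCoeff hper.lift k = fourierCoeffP f k := by
  rw [fourierCoeff_eq_intervalIntegral _ k 0, fourierCoeffP, zero_add]
  have h : ∀ x : ℝ, (fourier (-k) (x : AddCircle (2 * Real.pi)) : ℂ) • hper.lift x
      = (f x : ℂ) * Complex.exp (-(Complex.I) * k * x) := by
    intro x
    rw [smul_eq_mul, fourier_neg_coe, Periodic.lift_coe, mul_comm]
  simp_rw [h]
  rw [Complex.real_smul]
  congr 1
  push_cast
  ring

lemma measurable_lift (f : ℝ → ℂ) (hper : Periodic f (2 * Real.pi)) (hm : Measurable f) :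
    Measurable hper.lift := by
  have key : hper.lift =
      (fun y : Ioc (0:ℝ) (0 + 2 * Real.pi) => f (y : ℝ)) ∘
        (AddCircle.measurableEquivIoc (2 * Real.pi) 0) := by
    ext z
    simp only [Function.comp_apply]
    conv_lhs => rw [← (AddCircle.measurableEquivIoc (2 * Real.pi) 0).symm_apply_apply z]
    exact hper.lift_coe _
  rw [key]
  exact (hm.comp measurable_subtype_coe).comp
    (AddCircle.measurableEquivIoc (2 * Real.pi) 0).measurable

lemma memLp_lift (f : ℝ → ℝ) (hper : Periodic (fun x => (f x : ℂ)) (2 * Real.pi))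
    (hm : Measurable f) (hf2 : IntegrableOn (fun x => (f x) ^ 2) (Ioc 0 (2 * Real.pi))) :
    MemLp hper.lift 2 AddCircle.haarAddCircle := by
  have hmlift : Measurable hper.lift :=
    measurable_lift _ hper (Complex.measurable_ofReal.comp hm)
  rw [memLp_two_iff_integrable_sq_norm hmlift.aestronglyMeasurable]
  have hsq : Measurable (fun z : AddCircle (2 * Real.pi) => ‖hper.lift z‖ ^ 2) :=
    (hmlift.norm).pow_const 2
  have hvol : Integrable (fun z : AddCircle (2 * Real.pi) => ‖hper.lift z‖ ^ 2) volume := by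
    rw [← (AddCircle.measurePreserving_mk (2 * Real.pi) 0).integrable_comp
      hsq.aestronglyMeasurable]
    have : ((fun z : AddCircle (2 * Real.pi) => ‖hper.lift z‖ ^ 2) ∘ QuotientAddGroup.mk)
        = fun x : ℝ => (f x) ^ 2 := by
      funext x
      simp only [Function.comp_apply]
      rw [show (QuotientAddGroup.mk x : AddCircle (2 * Real.pi)) = (x : AddCircle (2*Real.pi)) from rfl,
        hper.lift_coe]
      simp [_root_.sq_abs]
    rw [this]
    simpa [IntegrableOn] using hf2
  rw [AddCircle.volume_eq_smul_haarAddCircle (T := 2 * Real.pi)] at hvol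
  exact (integrable_smul_measure
    (ne_of_gt (ENNReal.ofReal_pos.mpr (by positivity))) ENNReal.ofReal_ne_top).mp hvol

lemma integrableOn_of_sq (f : ℝ → ℝ) (hm : Measurable f)
    (hf2 : IntegrableOn (fun x => (f x) ^ 2) (Ioc 0 (2 * Real.pi))) :
    IntegrableOn f (Ioc 0 (2 * Real.pi)) := by
  have hconst : IntegrableOn (fun _ : ℝ => (1:ℝ)) (Ioc 0 (2 * Real.pi)) :=
    integrableOn_const measure_Ioc_lt_top.ne
  refine (hf2.add hconst).mono' hm.aestronglyMeasurable ?_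
  filter_upwards with x
  rw [Real.norm_eq_abs]
  simp only [Pi.add_apply]
  nlinarith [abs_nonneg (f x), _root_.sq_abs (f x)]

lemma intervalIntegrable_mul_exp (f : ℝ → ℝ) (hm : Measurable f)
    (hf2 : IntegrableOn (fun x => (f x) ^ 2) (Ioc 0 (2 * Real.pi))) (m : ℤ) :
    IntervalIntegrable (fun x => (f x : ℂ) * Complex.exp (-(Complex.I) * m * x))
      volume 0 (2 * Real.pi) := by
  have hint := integrableOn_of_sq f hm hf2
  rw [intervalIntegrable_iff_integrableOn_Ioc_of_le (by positivity)]
  have hmexp : Measurable (fun x : ℝ => Complex.exp (-(Complex.I) * m * x)) :=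
    Complex.measurable_exp.comp (measurable_const.mul Complex.measurable_ofReal)
  refine (hint.abs).mono' ((Complex.measurable_ofReal.comp hm).mul hmexp
    ).aestronglyMeasurable ?_
  filter_upwards with x
  rw [norm_mul]
  have h1 : ‖Complex.exp (-(Complex.I) * m * x)‖ = 1 := by
    rw [show (-(Complex.I) * m * x : ℂ) = ((-(m:ℝ) * x : ℝ) : ℂ) * Complex.I by push_cast; ring]
    exact Complex.norm_exp_ofReal_mul_I _
  rw [h1, mul_one, Complex.norm_real]
  simp [Real.norm_eq_abs]

lemma conj_fourierCoeffP (f : ℝ → ℝ) (k : ℤ) :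
    (starRingEnd ℂ) (fourierCoeffP f k) = fourierCoeffP f (-k) := by
  rw [fourierCoeffP, fourierCoeffP, map_mul]
  congr 1
  · have h2 : (starRingEnd ℂ) (2:ℂ) = 2 := by
      rw [show (2:ℂ) = ((2:ℝ):ℂ) by norm_num, Complex.conj_ofReal]
    rw [map_div₀, map_one, map_mul, Complex.conj_ofReal, h2]
  · rw [intervalIntegral.integral_of_le (by positivity),
      intervalIntegral.integral_of_le (by positivity), ← integral_conj]
    apply integral_congr_ae
    filter_upwards with x
    rw [map_mul, Complex.conj_ofReal, ← Complex.exp_conj]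
    congr 2
    simp only [map_mul, map_neg, Complex.conj_I, Complex.conj_ofReal, map_intCast]
    push_cast
    ring

lemma norm_exp_I_mul_ofReal (r : ℝ) : ‖Complex.exp (Complex.I * r)‖ = 1 := by
  rw [Complex.norm_exp]
  simp

lemma norm_exp_neg_I_mul_ofReal (r : ℝ) : ‖Complex.exp (-(Complex.I) * r)‖ = 1 := by
  rw [Complex.norm_exp]
  simp

lemma norm_term (k m : ℤ) (c x y : ℂ) (hc : ‖c‖ = 1) :
    ‖(k:ℂ) / 2 * c * ((m.natAbs : ℕ) : ℂ) * x * y‖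
      = |(k:ℝ)| / 2 * |(m:ℝ)| * ‖x‖ * ‖y‖ := by
  rw [norm_mul, norm_mul, norm_mul, norm_mul, norm_div, hc, mul_one]
  have h1 : ‖((k:ℤ):ℂ)‖ = |(k:ℝ)| := by
    rw [Complex.norm_intCast]
  have h2 : ‖((m.natAbs : ℕ) : ℂ)‖ = |(m:ℝ)| := by
    rw [Complex.norm_natCast, Nat.cast_natAbs, Int.cast_abs]
  have h3 : ‖(2:ℂ)‖ = 2 := by norm_num
  rw [h1, h2, h3]

lemma intId1 (k : ℤ) : k * |k - 1| + (1 - k) * |(-k)| = 0 := by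
  rcases le_or_gt 1 k with h | h
  · have e1 : |k - 1| = k - 1 := _root_.abs_of_nonneg (by omega)
    have e2 : |(-k)| = k := by rw [abs_neg, _root_.abs_of_nonneg (by omega)]
    rw [e1, e2]; ring
  · have e1 : |k - 1| = -(k - 1) := _root_.abs_of_nonpos (by omega)
    have e2 : |(-k)| = -k := _root_.abs_of_nonneg (by omega)
    rw [e1, e2]; ring

lemma intId2 (k : ℤ) : k * |k + 1| + (-1 - k) * |(-k)| = 0 := by
  rcases le_or_gt 0 k with h | h
  · have e1 : |k + 1| = k + 1 := _root_.abs_of_nonneg (by omega)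
    have e2 : |(-k)| = k := by rw [abs_neg, _root_.abs_of_nonneg (by omega)]
    rw [e1, e2]; ring
  · have e1 : |k + 1| = -(k + 1) := _root_.abs_of_nonpos (by omega)
    have e2 : |(-k)| = -k := _root_.abs_of_nonneg (by omega)
    rw [e1, e2]; ring

lemma natAbs_cast_complex (m : ℤ) : ((m.natAbs : ℕ) : ℂ) = ((|m| : ℤ) : ℂ) := by
  rw [Int.abs_eq_natAbs, Int.cast_natCast]

lemma tsum_zero_of_invol {f : ℤ → ℂ} (hf : Summable f) (σ : ℤ → ℤ)
    (hσ : Function.Involutive σ) (h : ∀ k, f k + f (σ k) = 0) : ∑' k, f k = 0 := by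
  have h1 : ∑' k, f (σ k) = ∑' k, f k := (hσ.toPerm σ).tsum_eq f
  have h2 : Summable (fun k => f (σ k)) := ((hσ.toPerm σ).summable_iff).mpr hf
  have h3 : (∑' k, f k) + (∑' k, f (σ k)) = ∑' k, (f k + f (σ k)) := (Summable.tsum_add hf h2).symm
  rw [h1] at h3
  simp only [h, tsum_zero] at h3
  exact add_self_eq_zero.mp h3

lemma sin_ofReal_expand (t : ℝ) :
    ((Real.sin t : ℝ) : ℂ) =
      (Complex.exp (-(t:ℂ) * Complex.I) - Complex.exp ((t:ℂ) * Complex.I)) * Complex.I / 2 := by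
  rw [Complex.ofReal_sin, Complex.exp_mul_I, Complex.exp_mul_I,
    Complex.cos_neg, Complex.sin_neg]
  linear_combination (Complex.sin (t:ℂ)) * Complex.I_sq

end HalfLapAux

set_option maxHeartbeats 2000000

/-- For `u ∈ H¹(S¹, ℝ)` and every `δ ∈ ℝ`,
`∫_{S¹} u'(x)·(−Δ)^{1/2}u(x)·sin(x−δ) dx = 0`.  Here `du = u'` and `hu = (−Δ)^{1/2}u`
are encoded by their Fourier coefficients `ik û(k)` and `|k| û(k)`. -/
theorem integral_deriv_halfLap_sin_zero (u du hu : ℝ → ℝ) (δ : ℝ)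
    (hu_per : Function.Periodic u (2 * Real.pi))
    (hdu_per : Function.Periodic du (2 * Real.pi))
    (hhu_per : Function.Periodic hu (2 * Real.pi))
    (hmu : Measurable u) (hmdu : Measurable du) (hmhu : Measurable hu)
    (hu2 : IntegrableOn (fun x => (u x) ^ 2) (Set.Ioc 0 (2 * Real.pi)))
    (hdu2 : IntegrableOn (fun x => (du x) ^ 2) (Set.Ioc 0 (2 * Real.pi)))
    (hhu2 : IntegrableOn (fun x => (hu x) ^ 2) (Set.Ioc 0 (2 * Real.pi)))
    (hH1 : Summable fun k : ℤ => (1 + (k : ℝ) ^ 2) * ‖fourierCoeffP u k‖ ^ 2)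
    (hcdu : ∀ k : ℤ, fourierCoeffP du k = Complex.I * (k : ℂ) * fourierCoeffP u k)
    (hchu : ∀ k : ℤ, fourierCoeffP hu k = (k.natAbs : ℂ) * fourierCoeffP u k) :
    ∫ x in (0:ℝ)..(2 * Real.pi), du x * hu x * Real.sin (x - δ) = 0 := by
  classical
  set g : ℝ → ℝ := fun x => hu x * Real.sin (x - δ) with hg_def
  -- periodicity of complexifications
  have hduC : Function.Periodic (fun x => (du x : ℂ)) (2 * Real.pi) := by
    intro x; simp [hdu_per x]
  have hgC : Function.Periodic (fun x => (g x : ℂ)) (2 * Real.pi) := by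
    intro x
    have hs : Real.sin (x + 2 * Real.pi - δ) = Real.sin (x - δ) := by
      rw [show x + 2 * Real.pi - δ = (x - δ) + 2 * Real.pi by ring, Real.sin_add_two_pi]
    simp [hg_def, hhu_per x, hs]
  have hmg : Measurable g :=
    hmhu.mul (Real.measurable_sin.comp (measurable_id.sub_const δ))
  have hg2 : IntegrableOn (fun x => (g x) ^ 2) (Ioc 0 (2 * Real.pi)) := by
    refine hhu2.mono' ((hmg.pow_const 2)).aestronglyMeasurable ?_
    filter_upwards with x
    rw [Real.norm_eq_abs]
    have habs : |g x ^ 2| = g x ^ 2 := abs_of_nonneg (sq_nonneg _)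
    rw [habs]
    simp only [hg_def]
    have h1 : Real.sin (x - δ) ^ 2 ≤ 1 := Real.sin_sq_le_one _
    nlinarith [sq_nonneg (hu x), sq_nonneg (hu x * Real.sin (x - δ))]
  -- the lifted functions and their L² membership
  set F := hduC.lift with hF_def
  set G := hgC.lift with hG_def
  have hFm : MemLp F 2 AddCircle.haarAddCircle := HalfLapAux.memLp_lift du hduC hmdu hdu2
  have hGm : MemLp G 2 AddCircle.haarAddCircle := HalfLapAux.memLp_lift g hgC hmg hg2
  -- Fourier coefficients of G
  have hgcoef : ∀ k : ℤ, fourierCoeffP g k =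
      Complex.I / 2 * (Complex.exp (Complex.I * δ) * fourierCoeffP hu (k + 1)
        - Complex.exp (-(Complex.I) * δ) * fourierCoeffP hu (k - 1)) := by
    intro k
    have int1 := HalfLapAux.intervalIntegrable_mul_exp hu hmhu hhu2 (k + 1)
    have int2 := HalfLapAux.intervalIntegrable_mul_exp hu hmhu hhu2 (k - 1)
    have hpt : ∀ x : ℝ, (g x : ℂ) * Complex.exp (-(Complex.I) * k * x)
        = (Complex.I / 2 * Complex.exp (Complex.I * δ)) *
            ((hu x : ℂ) * Complex.exp (-(Complex.I) * ((k+1 : ℤ) : ℂ) * x))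
          - (Complex.I / 2 * Complex.exp (-(Complex.I) * δ)) *
            ((hu x : ℂ) * Complex.exp (-(Complex.I) * ((k-1 : ℤ) : ℂ) * x)) := by
      intro x
      have E1 : Complex.exp (-((x:ℂ) - δ) * Complex.I) * Complex.exp (-(Complex.I) * k * x)
          = Complex.exp (Complex.I * δ) * Complex.exp (-(Complex.I) * ((k+1 : ℤ) : ℂ) * x) := by
        rw [← Complex.exp_add, ← Complex.exp_add]; congr 1; push_cast; ring
      have E2 : Complex.exp (((x:ℂ) - δ) * Complex.I) * Complex.exp (-(Complex.I) * k * x)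
          = Complex.exp (-(Complex.I) * δ) * Complex.exp (-(Complex.I) * ((k-1 : ℤ) : ℂ) * x) := by
        rw [← Complex.exp_add, ← Complex.exp_add]; congr 1; push_cast; ring
      have hsin : ((Real.sin (x - δ) : ℝ) : ℂ)
          = (Complex.exp (-((x:ℂ) - δ) * Complex.I)
              - Complex.exp (((x:ℂ) - δ) * Complex.I)) * Complex.I / 2 := by
        have h := HalfLapAux.sin_ofReal_expand (x - δ)
        rw [Complex.ofReal_sub] at h
        exact h
      have hgx : (g x : ℂ) = (hu x : ℂ) * ((Real.sin (x - δ) : ℝ) : ℂ) := by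
        rw [hg_def]; push_cast; ring
      rw [hgx, hsin]
      linear_combination ((hu x : ℂ) * Complex.I / 2) * E1 - ((hu x : ℂ) * Complex.I / 2) * E2
    rw [fourierCoeffP, fourierCoeffP, fourierCoeffP]
    have hint : (∫ x in (0:ℝ)..(2 * Real.pi), (g x : ℂ) * Complex.exp (-(Complex.I) * k * x))
        = (Complex.I / 2 * Complex.exp (Complex.I * δ)) *
            (∫ x in (0:ℝ)..(2 * Real.pi), (hu x : ℂ) * Complex.exp (-(Complex.I) * ((k+1:ℤ):ℂ) * x))
          - (Complex.I / 2 * Complex.exp (-(Complex.I) * δ)) *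
            (∫ x in (0:ℝ)..(2 * Real.pi), (hu x : ℂ) * Complex.exp (-(Complex.I) * ((k-1:ℤ):ℂ) * x)) := by
      rw [← intervalIntegral.integral_const_mul, ← intervalIntegral.integral_const_mul,
        ← intervalIntegral.integral_sub (int1.const_mul _) (int2.const_mul _)]
      apply intervalIntegral.integral_congr
      intro x _
      exact hpt x
    rw [hint]
    ring
  -- the terms of the Parseval sum
  set t1 : ℤ → ℂ := fun k => (k : ℂ) / 2 * Complex.exp (Complex.I * δ) *
      (((k + 1).natAbs : ℕ) : ℂ) * fourierCoeffP u (-k) * fourierCoeffP u (k + 1) with ht1_def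
  set t2 : ℤ → ℂ := fun k => -((k : ℂ) / 2 * Complex.exp (-(Complex.I) * δ) *
      (((k - 1).natAbs : ℕ) : ℂ) * fourierCoeffP u (-k) * fourierCoeffP u (k - 1)) with ht2_def
  have hterm : ∀ k : ℤ,
      (starRingEnd ℂ) (fourierCoeff F k) * fourierCoeff G k = t1 k + t2 k := by
    intro k
    rw [hF_def, hG_def, HalfLapAux.fourierCoeff_lift du hduC k,
      HalfLapAux.fourierCoeff_lift g hgC k,
      HalfLapAux.conj_fourierCoeffP, hcdu (-k), hgcoef k, hchu (k+1), hchu (k-1),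
      ht1_def, ht2_def]
    simp only
    push_cast
    linear_combination ((-(k : ℂ)) * fourierCoeffP u (-k) / 2 *
      (Complex.exp (Complex.I * δ) * (((k+1).natAbs : ℂ)) * fourierCoeffP u (k+1)
        - Complex.exp (-(Complex.I) * δ) * (((k-1).natAbs : ℂ)) * fourierCoeffP u (k-1)))
      * Complex.I_sq
  -- summability
  have hs_neg : Summable (fun k : ℤ =>
      (1 + ((-k : ℤ) : ℝ) ^ 2) * ‖fourierCoeffP u (-k)‖ ^ 2) :=
    ((Equiv.neg ℤ).summable_iff).mpr hH1
  have hs_add : ∀ c : ℤ, Summable (fun k : ℤ =>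
      (1 + ((k + c : ℤ) : ℝ) ^ 2) * ‖fourierCoeffP u (k + c)‖ ^ 2) :=
    fun c => ((Equiv.addRight c).summable_iff).mpr hH1
  have hs_sub : Summable (fun k : ℤ =>
      (1 + ((k - 1 : ℤ) : ℝ) ^ 2) * ‖fourierCoeffP u (k - 1)‖ ^ 2) := by
    have := hs_add (-1)
    simpa [sub_eq_add_neg] using this
  have ht1s : Summable t1 := by
    apply Summable.of_norm
    refine Summable.of_nonneg_of_le (fun k => norm_nonneg _) (fun k => ?_)
      ((hs_neg.add (hs_add 1)).mul_left (1/4))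
    · 
      have hb : ‖t1 k‖ = |(k:ℝ)| / 2 * |((k + 1 : ℤ) : ℝ)|
          * ‖fourierCoeffP u (-k)‖ * ‖fourierCoeffP u (k + 1)‖ := by
        rw [ht1_def]
        exact HalfLapAux.norm_term k (k+1) _ _ _ (HalfLapAux.norm_exp_I_mul_ofReal δ)
      rw [hb]
      push_cast
      nlinarith [sq_nonneg (|(k:ℝ)| * ‖fourierCoeffP u (-k)‖
          - |(k:ℝ) + 1| * ‖fourierCoeffP u (k + 1)‖),
        norm_nonneg (fourierCoeffP u (-k)), norm_nonneg (fourierCoeffP u (k + 1)),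
        _root_.sq_abs ((k:ℝ)), _root_.sq_abs ((k:ℝ) + 1),
        abs_nonneg ((k:ℝ)), abs_nonneg ((k:ℝ) + 1),
        sq_nonneg (‖fourierCoeffP u (-k)‖), sq_nonneg (‖fourierCoeffP u (k + 1)‖)]
  have ht2s : Summable t2 := by
    apply Summable.of_norm
    refine Summable.of_nonneg_of_le (fun k => norm_nonneg _) (fun k => ?_)
      ((hs_neg.add hs_sub).mul_left (1/4))
    · 
      have hb : ‖t2 k‖ = |(k:ℝ)| / 2 * |((k - 1 : ℤ) : ℝ)|
          * ‖fourierCoeffP u (-k)‖ * ‖fourierCoeffP u (k - 1)‖ := by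
        rw [ht2_def]
        simp only [norm_neg]
        exact HalfLapAux.norm_term k (k-1) _ _ _ (HalfLapAux.norm_exp_neg_I_mul_ofReal δ)
      rw [hb]
      push_cast
      nlinarith [sq_nonneg (|(k:ℝ)| * ‖fourierCoeffP u (-k)‖
          - |(k:ℝ) - 1| * ‖fourierCoeffP u (k - 1)‖),
        norm_nonneg (fourierCoeffP u (-k)), norm_nonneg (fourierCoeffP u (k - 1)),
        _root_.sq_abs ((k:ℝ)), _root_.sq_abs ((k:ℝ) - 1),
        abs_nonneg ((k:ℝ)), abs_nonneg ((k:ℝ) - 1),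
        sq_nonneg (‖fourierCoeffP u (-k)‖), sq_nonneg (‖fourierCoeffP u (k - 1)‖)]
  -- the Parseval sum vanishes
  have hsum1 : ∑' k, t1 k = 0 := by
    apply HalfLapAux.tsum_zero_of_invol ht1s (fun k => -1 - k) (fun k => by ring)
    intro k
    simp only [ht1_def]
    have e1 : (-1 - k + 1 : ℤ) = -k := by ring
    have e2 : (-(-1 - k) : ℤ) = k + 1 := by ring
    rw [e1, e2, HalfLapAux.natAbs_cast_complex, HalfLapAux.natAbs_cast_complex]
    have hz : (k : ℂ) * ((|k + 1| : ℤ) : ℂ)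
        + ((-1 - k : ℤ) : ℂ) * ((|(-k)| : ℤ) : ℂ) = 0 := by
      exact_mod_cast congrArg (fun n : ℤ => (n : ℂ)) (HalfLapAux.intId2 k)
    linear_combination (Complex.exp (Complex.I * δ) * fourierCoeffP u (-k)
      * fourierCoeffP u (k + 1) / 2) * hz
  have hsum2 : ∑' k, t2 k = 0 := by
    apply HalfLapAux.tsum_zero_of_invol ht2s (fun k => 1 - k) (fun k => by ring)
    intro k
    simp only [ht2_def]
    have e1 : (1 - k - 1 : ℤ) = -k := by ring
    have e2 : (-(1 - k) : ℤ) = k - 1 := by ring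
    rw [e1, e2, HalfLapAux.natAbs_cast_complex, HalfLapAux.natAbs_cast_complex]
    have hz : (k : ℂ) * ((|k - 1| : ℤ) : ℂ)
        + ((1 - k : ℤ) : ℂ) * ((|(-k)| : ℤ) : ℂ) = 0 := by
      exact_mod_cast congrArg (fun n : ℤ => (n : ℂ)) (HalfLapAux.intId1 k)
    linear_combination (-(Complex.exp (-(Complex.I) * δ)) * fourierCoeffP u (-k)
      * fourierCoeffP u (k - 1) / 2) * hz
  have htsum : ∑' k : ℤ, (starRingEnd ℂ) (fourierCoeff F k) * fourierCoeff G k = 0 := by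
    calc ∑' k : ℤ, (starRingEnd ℂ) (fourierCoeff F k) * fourierCoeff G k
        = ∑' k : ℤ, (t1 k + t2 k) := tsum_congr hterm
      _ = (∑' k, t1 k) + ∑' k, t2 k := Summable.tsum_add ht1s ht2s
      _ = 0 := by rw [hsum1, hsum2, add_zero]
  -- Parseval
  have hcoeF : ∀ i : ℤ, fourierCoeff ((hFm.toLp F : Lp ℂ 2 AddCircle.haarAddCircle)
      : AddCircle (2 * Real.pi) → ℂ) i = fourierCoeff F i := by
    intro i
    unfold fourierCoeff
    apply integral_congr_ae
    filter_upwards [hFm.coeFn_toLp] with z hz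
    rw [hz]
  have hcoeG : ∀ i : ℤ, fourierCoeff ((hGm.toLp G : Lp ℂ 2 AddCircle.haarAddCircle)
      : AddCircle (2 * Real.pi) → ℂ) i = fourierCoeff G i := by
    intro i
    unfold fourierCoeff
    apply integral_congr_ae
    filter_upwards [hGm.coeFn_toLp] with z hz
    rw [hz]
  have hparseval : ∫ z, (starRingEnd ℂ) (F z) * G z ∂AddCircle.haarAddCircle
      = ∑' k : ℤ, (starRingEnd ℂ) (fourierCoeff F k) * fourierCoeff G k := by
    have hFG := fourierBasis.tsum_inner_mul_inner (hFm.toLp F) (hGm.toLp G)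
    calc ∫ z, (starRingEnd ℂ) (F z) * G z ∂AddCircle.haarAddCircle
        = (inner ℂ (hFm.toLp F) (hGm.toLp G) : ℂ) := by
          rw [MeasureTheory.L2.inner_def]
          symm
          apply integral_congr_ae
          filter_upwards [hFm.coeFn_toLp, hGm.coeFn_toLp] with z hz1 hz2
          rw [hz1, hz2, RCLike.inner_apply, mul_comm]
      _ = ∑' i : ℤ, (inner ℂ (hFm.toLp F) (fourierBasis i) : ℂ)
            * (inner ℂ (fourierBasis i) (hGm.toLp G) : ℂ) := hFG.symm
      _ = ∑' k : ℤ, (starRingEnd ℂ) (fourierCoeff F k) * fourierCoeff G k := by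
          apply tsum_congr
          intro i
          have h1 : (inner ℂ (hFm.toLp F) (fourierBasis i) : ℂ)
              = (starRingEnd ℂ) (fourierBasis.repr (hFm.toLp F) i) := by
            rw [HilbertBasis.repr_apply_apply, inner_conj_symm]
          have h2 : (inner ℂ (fourierBasis i) (hGm.toLp G) : ℂ)
              = fourierBasis.repr (hGm.toLp G) i :=
            (HilbertBasis.repr_apply_apply _ _ _).symm
          rw [h1, h2, fourierBasis_repr, fourierBasis_repr, hcoeF, hcoeG]
  -- put everything together
  have hofReal : ((∫ x in (0:ℝ)..(2 * Real.pi), du x * hu x * Real.sin (x - δ) : ℝ) : ℂ) = 0 := by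
    rw [← intervalIntegral.integral_ofReal]
    have hx : ∀ x : ℝ, ((du x * hu x * Real.sin (x - δ) : ℝ) : ℂ)
        = (starRingEnd ℂ) (F (x : AddCircle (2 * Real.pi))) * G (x : AddCircle (2 * Real.pi)) := by
      intro x
      rw [hF_def, hG_def, hduC.lift_coe, hgC.lift_coe, Complex.conj_ofReal, hg_def]
      push_cast
      ring
    calc (∫ x in (0:ℝ)..(2 * Real.pi), ((du x * hu x * Real.sin (x - δ) : ℝ) : ℂ))
        = ∫ x in (0:ℝ)..(0 + 2 * Real.pi),
            (fun z : AddCircle (2 * Real.pi) =>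
              (starRingEnd ℂ) (F z) * G z) (x : AddCircle (2 * Real.pi)) := by
          rw [zero_add]
          apply intervalIntegral.integral_congr
          intro x _
          exact hx x
      _ = ∫ z : AddCircle (2 * Real.pi), (starRingEnd ℂ) (F z) * G z ∂volume := by
          exact AddCircle.intervalIntegral_preimage (2 * Real.pi) 0
            (fun z => (starRingEnd ℂ) (F z) * G z)
      _ = (ENNReal.ofReal (2 * Real.pi)).toReal •
            ∫ z, (starRingEnd ℂ) (F z) * G z ∂AddCircle.haarAddCircle := by
          rw [AddCircle.volume_eq_smul_haarAddCircle, integral_smul_measure]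
      _ = 0 := by rw [hparseval, htsum, smul_zero]
  exact_mod_cast hofReal
end

section
/- Characterization of half-wave stationary points by Fourier coefficients of the harmonic extension: let u ∈ H^{1/2}(S¹, ℝ^m) with Fourier coefficients û(k) ∈ ℂ^m, and let ũ(r,θ) = Σ_k r^{|k|} û(k) e^{ikθ} be its harmonic extension to the unit disc. Then the following are equivalent: (i) for every k ∈ ℕ_{>0}, Σ_{a+b=k, a,b≥1} a û(a) ·_{ℂ^m} b û(b) = 0; (ii) ∂_θ ũ · ∂_r ũ = 0 everywhere in the open unit disc. -/
open Filter

namespace HalfWaveAux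

open Complex Finset


noncomputable def D (m : ℕ) (c : ℤ → Fin m → ℂ) (n : ℕ) : ℂ :=
  ∑ p ∈ Finset.HasAntidiagonal.antidiagonal n, (p.1 : ℂ) * (p.2 : ℂ) * ∑ j, c p.1 j * c p.2 j

lemma norm_exp_eq_one {z : ℂ} (h : z.re = 0) : ‖Complex.exp z‖ = 1 := by
  rw [Complex.norm_exp, h, Real.exp_zero]

lemma D_zero (m : ℕ) (c : ℤ → Fin m → ℂ) : D m c 0 = 0 := by
  simp [D]

lemma D_eq (m : ℕ) (c : ℤ → Fin m → ℂ) (n : ℕ) :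
    (∑ a ∈ Finset.Ioo (0:ℤ) (n:ℤ),
      ((a : ℂ) * (((n:ℤ) - a : ℤ) : ℂ) * ∑ j : Fin m, c a j * c ((n:ℤ) - a) j)) = D m c n := by
  rw [D, Finset.Nat.sum_antidiagonal_eq_sum_range_succ_mk]
  have h1 : (∑ a ∈ Finset.Ioo (0:ℤ) (n:ℤ),
      ((a : ℂ) * (((n:ℤ) - a : ℤ) : ℂ) * ∑ j : Fin m, c a j * c ((n:ℤ) - a) j))
      = ∑ a ∈ Finset.Ioo (0:ℕ) n,
      (((a:ℤ) : ℂ) * (((n:ℤ) - a : ℤ) : ℂ) * ∑ j : Fin m, c a j * c ((n:ℤ) - (a:ℤ)) j) := by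
    refine Finset.sum_nbij' (fun a => a.toNat) (fun a => (a : ℤ)) ?_ ?_ ?_ ?_ ?_
    · intro a ha
      simp only [Finset.mem_Ioo] at ha ⊢
      omega
    · intro a ha
      simp only [Finset.mem_Ioo] at ha ⊢
      omega
    · intro a ha
      simp only [Finset.mem_Ioo] at ha
      beta_reduce
      omega
    · intro a ha
      beta_reduce
      omega
    · intro a ha
      simp only [Finset.mem_Ioo] at ha
      beta_reduce
      have h3 : ((a.toNat : ℤ)) = a := by omega
      rw [h3]
  rw [h1]
  rw [Finset.sum_subset (by intro a ha; simp only [Finset.mem_Ioo, Finset.mem_range] at *; omega :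
      Finset.Ioo (0:ℕ) n ⊆ Finset.range (n+1))]
  · refine Finset.sum_congr rfl fun a ha => ?_
    simp only [Finset.mem_range] at ha
    have h2 : ((n:ℤ) - (a:ℤ)) = ((n - a : ℕ) : ℤ) := by omega
    rw [h2]
    push_cast
    ring
  · intro a ha hna
    simp only [Finset.mem_range, Finset.mem_Ioo] at ha hna
    have : a = 0 ∨ a = n := by omega
    rcases this with rfl | rfl
    · simp
    · simp

lemma integral_exp_int (k : ℤ) :
    (∫ θ in (0:ℝ)..(2*Real.pi), Complex.exp (Complex.I * k * θ)) =
      if k = 0 then ((2*Real.pi : ℝ) : ℂ) else 0 := by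
  rcases eq_or_ne k 0 with rfl | hk
  · simp
  · rw [if_neg hk]
    have hc : Complex.I * k ≠ 0 := mul_ne_zero Complex.I_ne_zero (Int.cast_ne_zero.mpr hk)
    rw [integral_exp_mul_complex hc]
    have h1 : Complex.I * k * ((2*Real.pi : ℝ) : ℂ) = k * (2 * Real.pi * Complex.I) := by
      push_cast; ring
    have h2 : Complex.I * k * ((0:ℝ):ℂ) = 0 := by push_cast; ring
    rw [h1, h2, Complex.exp_int_mul_two_pi_mul_I, Complex.exp_zero, sub_self, zero_div]


lemma extract (d : ℕ → ℂ) (hs : Summable fun n => ‖d n‖)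
    (h : ∀ θ : ℝ, HasSum (fun n : ℕ => d n * Complex.exp (Complex.I * n * θ)
        - (starRingEnd ℂ) (d n) * Complex.exp (-(Complex.I * n * θ))) 0)
    (N : ℕ) (hN : N ≠ 0) : d N = 0 := by
  set F : ℕ → ℝ → ℂ := fun n θ => Complex.exp (-(Complex.I * N * θ)) *
      (d n * Complex.exp (Complex.I * n * θ)
        - (starRingEnd ℂ) (d n) * Complex.exp (-(Complex.I * n * θ))) with hF
  have hcont : ∀ n, Continuous (F n) := by
    intro n
    apply Continuous.mul
    · exact Complex.continuous_exp.comp (by fun_prop)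
    · apply Continuous.sub
      · exact continuous_const.mul (Complex.continuous_exp.comp (by fun_prop))
      · exact continuous_const.mul (Complex.continuous_exp.comp (by fun_prop))
  have hHS : HasSum (fun n => ∫ θ in (0:ℝ)..(2*Real.pi), F n θ)
      (∫ θ in (0:ℝ)..(2*Real.pi), (0:ℂ)) := by
    apply intervalIntegral.hasSum_integral_of_dominated_convergence
      (bound := fun n _ => 2 * ‖d n‖)
    · exact fun n => (hcont n).aestronglyMeasurable
    · intro n
      filter_upwards with θ _
      have h1 : ‖Complex.exp (-(Complex.I * (N:ℂ) * θ))‖ = 1 := by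
        apply norm_exp_eq_one; simp
      have h2 : ‖Complex.exp (Complex.I * (n:ℂ) * θ)‖ = 1 := by
        apply norm_exp_eq_one; simp
      have h3 : ‖Complex.exp (-(Complex.I * (n:ℂ) * θ))‖ = 1 := by
        apply norm_exp_eq_one; simp
      rw [hF]
      simp only []
      rw [norm_mul, h1, one_mul]
      calc ‖d n * Complex.exp (Complex.I * n * θ)
            - (starRingEnd ℂ) (d n) * Complex.exp (-(Complex.I * n * θ))‖
          ≤ ‖d n * Complex.exp (Complex.I * n * θ)‖
            + ‖(starRingEnd ℂ) (d n) * Complex.exp (-(Complex.I * n * θ))‖ := norm_sub_le _ _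
        _ = 2 * ‖d n‖ := by rw [norm_mul, norm_mul, h2, h3]; simp [RCLike.norm_conj]; ring
    · filter_upwards with θ _
      exact hs.mul_left 2
    · exact intervalIntegrable_const
    · filter_upwards with θ _
      simpa using (h θ).mul_left (Complex.exp (-(Complex.I * N * θ)))
  rw [intervalIntegral.integral_zero] at hHS
  have hcomp : ∀ n : ℕ, (∫ θ in (0:ℝ)..(2*Real.pi), F n θ)
      = if n = N then ((2*Real.pi:ℝ):ℂ) * d N else 0 := by
    intro n
    have hFθ : ∀ θ : ℝ, F n θ = d n * Complex.exp (Complex.I * (((n:ℤ) - N : ℤ):ℂ) * θ)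
        - (starRingEnd ℂ) (d n) * Complex.exp (Complex.I * ((-(n:ℤ) - N : ℤ):ℂ) * θ) := by
      intro θ
      rw [hF]
      simp only []
      have e1 : Complex.exp (-(Complex.I * (N:ℂ) * θ)) * Complex.exp (Complex.I * (n:ℂ) * θ)
          = Complex.exp (Complex.I * (((n:ℤ) - N : ℤ):ℂ) * θ) := by
        rw [← Complex.exp_add]; congr 1; push_cast; ring
      have e2 : Complex.exp (-(Complex.I * (N:ℂ) * θ)) * Complex.exp (-(Complex.I * (n:ℂ) * θ))
          = Complex.exp (Complex.I * ((-(n:ℤ) - N : ℤ):ℂ) * θ) := by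
        rw [← Complex.exp_add]; congr 1; push_cast; ring
      calc Complex.exp (-(Complex.I * (N:ℂ) * θ)) *
            (d n * Complex.exp (Complex.I * n * θ)
              - (starRingEnd ℂ) (d n) * Complex.exp (-(Complex.I * n * θ)))
          = d n * (Complex.exp (-(Complex.I * (N:ℂ) * θ)) * Complex.exp (Complex.I * (n:ℂ) * θ))
            - (starRingEnd ℂ) (d n) *
              (Complex.exp (-(Complex.I * (N:ℂ) * θ)) * Complex.exp (-(Complex.I * (n:ℂ) * θ))) := by
            ring
        _ = _ := by rw [e1, e2]
    rw [intervalIntegral.integral_congr (g :=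
        fun θ : ℝ => d n * Complex.exp (Complex.I * (((n:ℤ) - N : ℤ):ℂ) * θ)
          - (starRingEnd ℂ) (d n) * Complex.exp (Complex.I * ((-(n:ℤ) - N : ℤ):ℂ) * θ))
        (fun θ _ => hFθ θ)]
    rw [intervalIntegral.integral_sub]
    · rw [intervalIntegral.integral_const_mul, intervalIntegral.integral_const_mul,
        integral_exp_int, integral_exp_int]
      have h2 : ¬ (-(n:ℤ) - N = 0) := by omega
      rw [if_neg h2, mul_zero, sub_zero]
      rcases eq_or_ne n N with rfl | hn
      · rw [if_pos (by omega), if_pos rfl]; ring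
      · rw [if_neg (by omega), if_neg hn, mul_zero]
    · exact (Continuous.intervalIntegrable (by
        exact continuous_const.mul (Complex.continuous_exp.comp (by fun_prop))) _ _)
    · exact (Continuous.intervalIntegrable (by
        exact continuous_const.mul (Complex.continuous_exp.comp (by fun_prop))) _ _)
  rw [funext hcomp] at hHS
  have h0 : ((2*Real.pi:ℝ):ℂ) * d N = 0 :=
    (hasSum_ite_eq N (((2*Real.pi:ℝ):ℂ) * d N)).unique hHS
  have hpi : ((2*Real.pi:ℝ):ℂ) ≠ 0 := by
    simp [Real.pi_ne_zero]
  exact (mul_eq_zero.mp h0).resolve_left hpi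

lemma key (m : ℕ) (c : ℤ → Fin m → ℂ)
    (hreal : ∀ k : ℤ, ∀ j : Fin m, c (-k) j = starRingEnd ℂ (c k j))
    (M : ℝ) (hM : ∀ k j, ‖c k j‖ ≤ M)
    {r : ℝ} (hr0 : 0 < r) (hr1 : r < 1) (θ : ℝ) :
    ∃ S : ℂ,
      HasSum (fun n : ℕ => (r:ℂ)^n * Complex.exp (Complex.I * n * θ) * D m c n) S ∧
      Summable (fun n : ℕ => ‖(r:ℂ)^n * D m c n‖) ∧
      (∑ j : Fin m,
        (∑' k : ℤ, Complex.I * (k : ℂ) * ((r : ℂ)) ^ (k.natAbs) * c k j *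
            Complex.exp (Complex.I * (k : ℂ) * (θ : ℂ)))
        * (∑' k : ℤ, ((k.natAbs : ℂ)) * ((r : ℂ)) ^ ((k.natAbs : ℤ) - 1) * c k j *
            Complex.exp (Complex.I * (k : ℂ) * (θ : ℂ))))
      = Complex.I * (r:ℂ)⁻¹ * (S - (starRingEnd ℂ) S) := by
  have hrc : (r:ℂ) ≠ 0 := by
    exact_mod_cast hr0.ne'
  set t : Fin m → ℕ → ℂ := fun j n => (n:ℂ) * (r:ℂ)^n * c n j * Complex.exp (Complex.I * n * θ)
    with ht
  -- norm summability of t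
  have hnorm : ∀ j, Summable fun n : ℕ => ‖t j n‖ := by
    intro j
    have hM0 : 0 ≤ M := le_trans (norm_nonneg _) (hM 0 j)
    have hg : Summable fun n : ℕ => M * ((n:ℝ)^1 * r^n) :=
      (summable_pow_mul_geometric_of_norm_lt_one 1
        (by rwa [Real.norm_eq_abs, abs_of_pos hr0])).mul_left M
    refine Summable.of_nonneg_of_le (fun n => norm_nonneg _) (fun n => ?_) hg
    have hex : ‖Complex.exp (Complex.I * (n:ℂ) * θ)‖ = 1 := norm_exp_eq_one (by simp)
    rw [ht]
    simp only []
    rw [norm_mul, norm_mul, norm_mul, hex, mul_one, norm_pow, Complex.norm_real,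
      Real.norm_eq_abs, abs_of_pos hr0, Complex.norm_natCast, pow_one]
    have hrn : (0:ℝ) ≤ r^n := pow_nonneg hr0.le n
    nlinarith [mul_le_mul_of_nonneg_left (hM (n:ℤ) j)
      (mul_nonneg (Nat.cast_nonneg (α := ℝ) n) hrn)]
  have htsum : ∀ j, Summable (t j) := fun j => (hnorm j).of_norm
  set v : Fin m → ℂ := fun j => ∑' n, t j n with hv
  have hvs : ∀ j, HasSum (t j) (v j) := fun j => (htsum j).hasSum
  -- the A series (θ-derivative)
  set f1 : Fin m → ℤ → ℂ := fun j k => Complex.I * (k : ℂ) * ((r : ℂ)) ^ (k.natAbs) * c k j *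
      Complex.exp (Complex.I * (k : ℂ) * (θ : ℂ)) with hf1
  set f2 : Fin m → ℤ → ℂ := fun j k => ((k.natAbs : ℂ)) * ((r : ℂ)) ^ ((k.natAbs : ℤ) - 1) * c k j *
      Complex.exp (Complex.I * (k : ℂ) * (θ : ℂ)) with hf2
  have hf1symm : ∀ (k : ℤ) j, f1 j (-k) = (starRingEnd ℂ) (f1 j k) := by
    intro k j
    rw [hf1]
    simp only [map_mul, Complex.conj_I, map_pow, Complex.conj_ofReal, ← Complex.exp_conj,
      Int.natAbs_neg, Int.cast_neg, map_intCast, map_ofNat, ← hreal]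
    ring_nf
  have hf2symm : ∀ (k : ℤ) j, f2 j (-k) = (starRingEnd ℂ) (f2 j k) := by
    intro k j
    rw [hf2]
    simp only [map_mul, map_zpow₀, Complex.conj_ofReal, ← Complex.exp_conj,
      Int.natAbs_neg, Int.cast_neg, map_intCast, map_natCast, Complex.conj_I, ← hreal]
    ring_nf
  -- positive parts
  have hApos : ∀ j, HasSum (fun n : ℕ => f1 j (n:ℤ)) (Complex.I * v j) := by
    intro j
    have hfe : (fun n : ℕ => f1 j (n:ℤ)) = fun n => Complex.I * t j n := by
      funext n
      rw [hf1, ht]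
      simp only [Int.natAbs_natCast, Int.cast_natCast]
      ring
    rw [hfe]
    exact (hvs j).mul_left Complex.I
  have hBpos : ∀ j, HasSum (fun n : ℕ => f2 j (n:ℤ)) ((r:ℂ)⁻¹ * v j) := by
    intro j
    have hfe : (fun n : ℕ => f2 j (n:ℤ)) = fun n => (r:ℂ)⁻¹ * t j n := by
      funext n
      rw [hf2, ht]
      simp only [Int.natAbs_natCast, Int.cast_natCast]
      rw [zpow_sub₀ hrc, zpow_one, zpow_natCast]
      field_simp
    rw [hfe]
    exact (hvs j).mul_left _
  -- shifted positive parts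
  have hshift : ∀ (f : ℤ → ℂ) (S : ℂ), HasSum (fun n : ℕ => f (n:ℤ)) S → f 0 = 0 →
      HasSum (fun n : ℕ => f ((n:ℤ) + 1)) S := by
    intro f S hpos h0
    have h2 : HasSum (fun n : ℕ => f ((n + 1 : ℕ) : ℤ)) S :=
      (hasSum_nat_add_iff (f := fun n : ℕ => f (n:ℤ)) 1).mpr (by simpa [h0] using hpos)
    have hfe : (fun n : ℕ => f ((n:ℤ) + 1)) = fun n : ℕ => f ((n + 1 : ℕ) : ℤ) := by
      funext n; norm_cast
    rw [hfe]
    exact h2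
  -- full series over ℤ
  have hA : ∀ j, HasSum (f1 j)
      (Complex.I * v j + (starRingEnd ℂ) (Complex.I * v j)) := by
    intro j
    apply HasSum.of_nat_of_neg_add_one (hApos j)
    have h1 : HasSum (fun n : ℕ => f1 j ((n:ℤ) + 1)) (Complex.I * v j) :=
      hshift (f1 j) _ (hApos j) (by rw [hf1]; simp)
    have h2 := h1.star
    have hfe : (fun n : ℕ => f1 j (-((n:ℤ) + 1))) =
        fun n : ℕ => star (f1 j ((n:ℤ) + 1)) := by
      funext n
      rw [hf1symm ((n:ℤ) + 1) j]
      rfl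
    rw [hfe]
    convert h2 using 1
    exact starRingEnd_apply _
  have hB : ∀ j, HasSum (f2 j)
      ((r:ℂ)⁻¹ * v j + (starRingEnd ℂ) ((r:ℂ)⁻¹ * v j)) := by
    intro j
    apply HasSum.of_nat_of_neg_add_one (hBpos j)
    have h1 : HasSum (fun n : ℕ => f2 j ((n:ℤ) + 1)) ((r:ℂ)⁻¹ * v j) :=
      hshift (f2 j) _ (hBpos j) (by rw [hf2]; simp)
    have h2 := h1.star
    have hfe : (fun n : ℕ => f2 j (-((n:ℤ) + 1))) =
        fun n : ℕ => star (f2 j ((n:ℤ) + 1)) := by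
      funext n
      rw [hf2symm ((n:ℤ) + 1) j]
      rfl
    rw [hfe]
    convert h2 using 1
    exact starRingEnd_apply _
  -- Cauchy product per j
  set X : Fin m → ℕ → ℂ := fun j n =>
    ∑ p ∈ Finset.HasAntidiagonal.antidiagonal n, (p.1 : ℂ) * (p.2 : ℂ) * (c p.1 j * c p.2 j) with hX
  have hinner : ∀ j n, (∑ p ∈ Finset.HasAntidiagonal.antidiagonal n, t j p.1 * t j p.2)
      = (r:ℂ)^n * Complex.exp (Complex.I * n * θ) * X j n := by
    intro j n
    rw [hX]
    simp only []
    rw [Finset.mul_sum]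
    refine Finset.sum_congr rfl fun p hp => ?_
    have hpn : p.1 + p.2 = n := Finset.HasAntidiagonal.mem_antidiagonal.mp hp
    rw [ht]
    simp only []
    rw [← hpn, pow_add]
    have hexp : Complex.exp (Complex.I * ((p.1 + p.2 : ℕ):ℂ) * θ)
        = Complex.exp (Complex.I * (p.1:ℂ) * θ) * Complex.exp (Complex.I * (p.2:ℂ) * θ) := by
      rw [← Complex.exp_add]; congr 1; push_cast; ring
    rw [hexp]
    ring
  have hCnorm : ∀ j, Summable fun n : ℕ => ‖(r:ℂ)^n * Complex.exp (Complex.I * n * θ) * X j n‖ := by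
    intro j
    have h1 := summable_norm_sum_mul_antidiagonal_of_summable_norm (hnorm j) (hnorm j)
    refine h1.congr fun n => ?_
    rw [hinner j n]
  have hCau : ∀ j, HasSum (fun n : ℕ => (r:ℂ)^n * Complex.exp (Complex.I * n * θ) * X j n)
      (v j * v j) := by
    intro j
    have h2 := (hCnorm j).of_norm.hasSum
    have h3 : (∑' n : ℕ, (r:ℂ)^n * Complex.exp (Complex.I * n * θ) * X j n) = v j * v j := by
      rw [tsum_congr fun n => (hinner j n).symm]
      exact (tsum_mul_tsum_eq_tsum_sum_antidiagonal_of_summable_norm (hnorm j) (hnorm j)).symm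
    rwa [h3] at h2
  have hDX : ∀ n, D m c n = ∑ j, X j n := by
    intro n
    rw [D, hX]
    simp only []
    rw [Finset.sum_comm]
    refine Finset.sum_congr rfl fun p hp => ?_
    rw [Finset.mul_sum]
  -- combined HasSum
  have hW : HasSum (fun n : ℕ => (r:ℂ)^n * Complex.exp (Complex.I * n * θ) * D m c n)
      (∑ j, v j * v j) := by
    have h1 := hasSum_sum (f := fun (j : Fin m) (n : ℕ) =>
      (r:ℂ)^n * Complex.exp (Complex.I * n * θ) * X j n)
      (a := fun j => v j * v j) (s := Finset.univ) (fun j _ => hCau j)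
    have hfe : (fun n : ℕ => ∑ j, (r:ℂ)^n * Complex.exp (Complex.I * n * θ) * X j n)
        = fun n : ℕ => (r:ℂ)^n * Complex.exp (Complex.I * n * θ) * D m c n := by
      funext n
      rw [hDX, Finset.mul_sum]
    rwa [hfe] at h1
  -- norm summability of combined
  have hWnorm : Summable (fun n : ℕ => ‖(r:ℂ)^n * D m c n‖) := by
    have h1 : Summable (fun n : ℕ => ∑ j, ‖(r:ℂ)^n * Complex.exp (Complex.I * n * θ) * X j n‖) :=
      summable_sum (fun j _ => hCnorm j)
    refine Summable.of_nonneg_of_le (fun n => norm_nonneg _) (fun n => ?_) h1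
    have hex : ‖Complex.exp (Complex.I * (n:ℂ) * θ)‖ = 1 := norm_exp_eq_one (by simp)
    calc ‖(r:ℂ)^n * D m c n‖ = ‖(r:ℂ)^n‖ * ‖∑ j, X j n‖ := by rw [norm_mul, hDX]
      _ ≤ ‖(r:ℂ)^n‖ * ∑ j, ‖X j n‖ := by
          gcongr
          exact norm_sum_le _ _
      _ = ∑ j, ‖(r:ℂ)^n * Complex.exp (Complex.I * n * θ) * X j n‖ := by
          rw [Finset.mul_sum]
          refine Finset.sum_congr rfl fun j _ => ?_
          rw [norm_mul, norm_mul, hex, mul_one]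
  refine ⟨∑ j, v j * v j, hW, hWnorm, ?_⟩
  have hAB : ∀ j, (∑' k : ℤ, f1 j k) * (∑' k : ℤ, f2 j k)
      = Complex.I * (r:ℂ)⁻¹ * (v j * v j - (starRingEnd ℂ) (v j * v j)) := by
    intro j
    rw [(hA j).tsum_eq, (hB j).tsum_eq]
    simp only [map_mul, Complex.conj_I, map_inv₀, Complex.conj_ofReal]
    ring
  calc (∑ j : Fin m, (∑' k : ℤ, f1 j k) * (∑' k : ℤ, f2 j k))
      = ∑ j, Complex.I * (r:ℂ)⁻¹ * (v j * v j - (starRingEnd ℂ) (v j * v j)) :=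
        Finset.sum_congr rfl fun j _ => hAB j
    _ = Complex.I * (r:ℂ)⁻¹ * ((∑ j, v j * v j) - (starRingEnd ℂ) (∑ j, v j * v j)) := by
        rw [← Finset.mul_sum, Finset.sum_sub_distrib, map_sum]

end HalfWaveAux

open HalfWaveAux in
/-- Characterization of half-wave stationary points by Fourier coefficients of the
harmonic extension. -/
theorem stationary_iff_orthogonal_derivatives (m : ℕ) (c : ℤ → Fin m → ℂ)
    (hreal : ∀ k : ℤ, ∀ j : Fin m, c (-k) j = starRingEnd ℂ (c k j))
    (hsum : Summable fun k : ℤ => (k.natAbs : ℝ) * ∑ j : Fin m, ‖c k j‖ ^ 2) :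
    (∀ k : ℤ, 0 < k →
      ∑ a ∈ Finset.Ioo (0:ℤ) k,
        ((a : ℂ) * ((k - a : ℤ) : ℂ) * ∑ j : Fin m, c a j * c (k - a) j) = 0)
    ↔ (∀ r : ℝ, 0 < r → r < 1 → ∀ θ : ℝ,
        ∑ j : Fin m,
          (∑' k : ℤ, Complex.I * (k : ℂ) * ((r : ℂ)) ^ (k.natAbs) * c k j *
              Complex.exp (Complex.I * (k : ℂ) * (θ : ℂ)))
          * (∑' k : ℤ, ((k.natAbs : ℂ)) * ((r : ℂ)) ^ ((k.natAbs : ℤ) - 1) * c k j *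
              Complex.exp (Complex.I * (k : ℂ) * (θ : ℂ))) = 0) := by
  -- a uniform bound on the coefficients
  obtain ⟨M, hM⟩ : ∃ M : ℝ, ∀ (k : ℤ) (j : Fin m), ‖c k j‖ ≤ M := by
    set S : ℝ := ∑' k : ℤ, (k.natAbs : ℝ) * ∑ j : Fin m, ‖c k j‖ ^ 2 with hS
    refine ⟨Real.sqrt (max S 0) + ∑ j : Fin m, ‖c 0 j‖, fun k j => ?_⟩
    have hsq : (0:ℝ) ≤ Real.sqrt (max S 0) := Real.sqrt_nonneg _
    have hsn : (0:ℝ) ≤ ∑ j' : Fin m, ‖c 0 j'‖ :=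
      Finset.sum_nonneg fun _ _ => norm_nonneg _
    rcases eq_or_ne k 0 with rfl | hk
    · have h1 : ‖c 0 j‖ ≤ ∑ j' : Fin m, ‖c 0 j'‖ :=
        Finset.single_le_sum (fun _ _ => norm_nonneg _) (Finset.mem_univ j)
      linarith
    · have hnn : ∀ k' : ℤ, 0 ≤ (k'.natAbs : ℝ) * ∑ j' : Fin m, ‖c k' j'‖ ^ 2 :=
        fun k' => mul_nonneg (Nat.cast_nonneg _)
          (Finset.sum_nonneg fun _ _ => sq_nonneg _)
      have h1 : (k.natAbs : ℝ) * ∑ j' : Fin m, ‖c k j'‖ ^ 2 ≤ S :=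
        hsum.le_tsum k fun k' _ => hnn k'
      have hk1 : (1:ℝ) ≤ (k.natAbs : ℝ) := by
        have : 1 ≤ k.natAbs := Nat.one_le_iff_ne_zero.mpr (Int.natAbs_ne_zero.mpr hk)
        exact_mod_cast this
      have h3 : ‖c k j‖ ^ 2 ≤ ∑ j' : Fin m, ‖c k j'‖ ^ 2 :=
        Finset.single_le_sum (f := fun j' => ‖c k j'‖ ^ 2)
          (fun _ _ => sq_nonneg _) (Finset.mem_univ j)
      have hsnn : (0:ℝ) ≤ ∑ j' : Fin m, ‖c k j'‖ ^ 2 :=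
        Finset.sum_nonneg fun _ _ => sq_nonneg _
      have h2 : ‖c k j‖ ^ 2 ≤ max S 0 := by
        have : ‖c k j‖ ^ 2 ≤ S := by nlinarith
        exact le_max_of_le_left this
      have h4 : ‖c k j‖ ≤ Real.sqrt (max S 0) := by
        calc ‖c k j‖ = Real.sqrt (‖c k j‖ ^ 2) := (Real.sqrt_sq (norm_nonneg _)).symm
          _ ≤ Real.sqrt (max S 0) := Real.sqrt_le_sqrt h2
      linarith
  constructor
  · intro hcoef r hr0 hr1 θ
    obtain ⟨S, hW, -, hkey⟩ := key m c hreal M hM hr0 hr1 θ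
    have hD : ∀ n : ℕ, D m c n = 0 := by
      intro n
      rcases Nat.eq_zero_or_pos n with rfl | hn
      · exact D_zero m c
      · rw [← D_eq m c n]
        exact hcoef (n:ℤ) (by exact_mod_cast hn)
    have hS0 : S = 0 := by
      have h0 : HasSum (fun _ : ℕ => (0:ℂ)) S := by
        have hfe : (fun n : ℕ => (r:ℂ)^n * Complex.exp (Complex.I * n * θ) * D m c n)
            = fun _ : ℕ => (0:ℂ) := by
          funext n; rw [hD n, mul_zero]
        rwa [hfe] at hW
      exact h0.unique hasSum_zero
    rw [hkey, hS0]
    simp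
  · intro hrhs k hk
    have h12 : (0:ℝ) < 1/2 := by norm_num
    have h12' : (1/2 : ℝ) < 1 := by norm_num
    have hD : ∀ N : ℕ, N ≠ 0 → D m c N = 0 := by
      intro N hN
      obtain ⟨S0, hW0, hsn, -⟩ := key m c hreal M hM h12 h12' 0
      have hext := extract (fun n => (((1:ℝ)/2:ℝ):ℂ)^n * D m c n) hsn ?_ N hN
      · have h2 : (((1:ℝ)/2:ℝ):ℂ)^N ≠ 0 := by
          apply pow_ne_zero; norm_num
        exact (mul_eq_zero.mp hext).resolve_left h2
      · intro θ
        obtain ⟨S, hW, -, hkey⟩ := key m c hreal M hM h12 h12' θ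
        have h0 := hrhs (1/2) h12 h12' θ
        rw [hkey] at h0
        have hS : S - (starRingEnd ℂ) S = 0 := by
          have hI : Complex.I * (((1/2:ℝ):ℂ))⁻¹ ≠ 0 := by
            apply mul_ne_zero Complex.I_ne_zero
            simp
          exact (mul_eq_zero.mp h0).resolve_left hI
        have hconj : HasSum
            (fun n : ℕ => (starRingEnd ℂ)
              (((1/2:ℝ):ℂ)^n * Complex.exp (Complex.I * n * θ) * D m c n))
            ((starRingEnd ℂ) S) := hW.star
        have hsub := hW.sub hconj
        rw [hS] at hsub
        have hfe : (fun n : ℕ =>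
            ((1/2:ℝ):ℂ)^n * Complex.exp (Complex.I * n * θ) * D m c n
              - (starRingEnd ℂ)
                (((1/2:ℝ):ℂ)^n * Complex.exp (Complex.I * n * θ) * D m c n))
            = fun n : ℕ => (((1:ℝ)/2:ℝ):ℂ)^n * D m c n * Complex.exp (Complex.I * n * θ)
              - (starRingEnd ℂ) ((((1:ℝ)/2:ℝ):ℂ)^n * D m c n) *
                Complex.exp (-(Complex.I * n * θ)) := by
          funext n
          have hc1 : (starRingEnd ℂ) (Complex.exp (Complex.I * n * θ))
              = Complex.exp (-(Complex.I * n * θ)) := by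
            rw [← Complex.exp_conj]
            congr 1
            simp [map_mul, Complex.conj_I, Complex.conj_ofReal]
          simp only [map_mul, map_pow, Complex.conj_ofReal, hc1]
          ring
        rwa [hfe] at hsub
    have hk' : k = ((k.toNat : ℕ) : ℤ) := (Int.toNat_of_nonneg hk.le).symm
    rw [hk', D_eq m c k.toNat]
    exact hD k.toNat (by omega)
end

section
/- Asymptotics of the half-Laplacian past an endpoint, model case: for α > 0 and ε > 0, define u(y) = α(b−y)^{1/2} for y ∈ (b−ε, b) and u(y) = 0 for y ≥ b. Then lim_{x→b⁺} (x−b)^{1/2} · (1/π)∫_{b−ε}^{b} u(y)/(x−y)² dy = α/2. -/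
open MeasureTheory Filter Set

lemma halfLap_key (ε b x : ℝ) (hε : 0 < ε) (hx : b < x) :
    ∫ y in (b - ε)..b, Real.sqrt (b - y) / (x - y) ^ 2 =
      Real.arctan (Real.sqrt ε / Real.sqrt (x - b)) / Real.sqrt (x - b)
        - Real.sqrt ε / ((x - b) + ε) := by
  set s : ℝ := x - b with hs_def
  have hs : 0 < s := sub_pos.mpr hx
  have hss : Real.sqrt s > 0 := Real.sqrt_pos.mpr hs
  -- substitution y = b - w^2
  have hsub : (∫ w in Real.sqrt ε..0, (-(2*w)) • ((fun y => Real.sqrt (b - y) / (x - y) ^ 2) ∘ (fun w => b - w^2)) w)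
      = ∫ y in (b - ε)..b, Real.sqrt (b - y) / (x - y) ^ 2 := by
    have := intervalIntegral.integral_comp_smul_deriv' (a := Real.sqrt ε) (b := 0)
      (f := fun w => b - w ^ 2) (f' := fun w => -(2*w))
      (g := fun y => Real.sqrt (b - y) / (x - y) ^ 2)
      (fun w _ => by
        simpa using ((hasDerivAt_pow 2 w).const_sub b))
      (by fun_prop)
      (by
        apply ContinuousOn.div
        · exact (Real.continuous_sqrt.comp (continuous_const.sub continuous_id)).continuousOn
        · exact ((continuous_const.sub continuous_id).pow 2).continuousOn
        · rintro y ⟨w, hw, rfl⟩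
          have : b - w ^ 2 ≤ b := by nlinarith [sq_nonneg w]
          have hxy : 0 < x - (b - w ^ 2) := by linarith
          positivity)
    rw [this]
    norm_num [Real.sq_sqrt hε.le]
  rw [← hsub]
  have heval : ∀ w ∈ uIcc (0:ℝ) (Real.sqrt ε),
      HasDerivAt (fun w => Real.arctan (w / Real.sqrt s) / Real.sqrt s - w / (s + w ^ 2))
        (2 * w ^ 2 / (s + w ^ 2) ^ 2) w := by
    intro w _
    have hden : s + w ^ 2 ≠ 0 := by positivity
    have h1 : HasDerivAt (fun w : ℝ => Real.arctan (w / Real.sqrt s))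
        ((1 / (1 + (w / Real.sqrt s) ^ 2)) * (1 / Real.sqrt s)) w := by
      exact (Real.hasDerivAt_arctan (w / Real.sqrt s)).comp w
        ((hasDerivAt_id w).div_const (Real.sqrt s))
    have h2 : HasDerivAt (fun w : ℝ => w / (s + w ^ 2))
        ((1 * (s + w ^ 2) - w * (2 * w)) / (s + w ^ 2) ^ 2) w := by
      exact (hasDerivAt_id w).div (by simpa using (hasDerivAt_pow 2 w).const_add s) hden
    have := (h1.div_const (Real.sqrt s)).sub h2
    refine this.congr_deriv ?_
    set r := Real.sqrt s with hr_def
    have hr : 0 < r := hss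
    have hr2 : r ^ 2 = s := Real.sq_sqrt hs.le
    rw [← hr2]
    have hd : r ^ 2 + w ^ 2 ≠ 0 := by positivity
    field_simp
    ring
  -- FTC on the w-integral
  have hcont : ContinuousOn (fun w : ℝ => 2 * w ^ 2 / (s + w ^ 2) ^ 2)
      (uIcc (0:ℝ) (Real.sqrt ε)) := by
    apply ContinuousOn.div
    · fun_prop
    · fun_prop
    · intro w _
      positivity
  have hftc := intervalIntegral.integral_eq_sub_of_hasDerivAt
    (f := fun w => Real.arctan (w / Real.sqrt s) / Real.sqrt s - w / (s + w ^ 2))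
    (fun w hw => heval w hw)
    (hcont.intervalIntegrable)
  have hswap : (∫ w in Real.sqrt ε..0, (-(2*w)) • ((fun y => Real.sqrt (b - y) / (x - y) ^ 2) ∘ (fun w => b - w^2)) w)
      = ∫ w in (0:ℝ)..Real.sqrt ε, 2 * w ^ 2 / (s + w ^ 2) ^ 2 := by
    rw [intervalIntegral.integral_symm 0 (Real.sqrt ε), ← intervalIntegral.integral_neg]
    apply intervalIntegral.integral_congr
    intro w hw
    rw [uIcc_of_le (Real.sqrt_nonneg ε)] at hw
    have hw0 : 0 ≤ w := hw.1
    simp only [Function.comp_apply, smul_eq_mul]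
    have : Real.sqrt (b - (b - w ^ 2)) = w := by
      rw [show b - (b - w ^ 2) = w ^ 2 by ring, Real.sqrt_sq hw0]
    rw [this]
    have : x - (b - w ^ 2) = s + w ^ 2 := by rw [hs_def]; ring
    rw [this]
    ring
  rw [hswap, hftc]
  simp [Real.sq_sqrt hε.le]

/-- Asymptotics of the half-Laplacian past an endpoint, model case: with
`u(y) = α(b−y)^{1/2}` on `(b−ε, b)`,
`lim_{x→b⁺} (x−b)^{1/2}·(1/π)∫_{b−ε}^{b} u(y)/(x−y)² dy = α/2`. -/
theorem halfLap_endpoint_asymptotics (α ε b : ℝ) (hα : 0 < α) (hε : 0 < ε) :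
    Filter.Tendsto
      (fun x : ℝ => Real.sqrt (x - b) *
        ((1 / Real.pi) * ∫ y in (b - ε)..b, α * Real.sqrt (b - y) / (x - y) ^ 2))
      (nhdsWithin b (Set.Ioi b)) (nhds (α / 2)) := by
  have hπ : (0:ℝ) < Real.pi := Real.pi_pos
  -- rewrite on Ioi b
  have hEq : ∀ᶠ x in nhdsWithin b (Set.Ioi b),
      Real.sqrt (x - b) *
        ((1 / Real.pi) * ∫ y in (b - ε)..b, α * Real.sqrt (b - y) / (x - y) ^ 2)
      = (α / Real.pi) * (Real.arctan (Real.sqrt ε / Real.sqrt (x - b))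
          - Real.sqrt (x - b) * (Real.sqrt ε / ((x - b) + ε))) := by
    filter_upwards [self_mem_nhdsWithin] with x hx
    have hx' : b < x := hx
    have hss : 0 < Real.sqrt (x - b) := Real.sqrt_pos.mpr (sub_pos.mpr hx')
    have : (∫ y in (b - ε)..b, α * Real.sqrt (b - y) / (x - y) ^ 2)
        = α * ∫ y in (b - ε)..b, Real.sqrt (b - y) / (x - y) ^ 2 := by
      rw [← intervalIntegral.integral_const_mul]
      apply intervalIntegral.integral_congr
      intro y _
      ring
    rw [this, halfLap_key ε b x hε hx']
    field_simp
  rw [Filter.tendsto_congr' hEq]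
  -- now compute the limit of the explicit expression
  have h0 : Filter.Tendsto (fun x : ℝ => x - b) (nhdsWithin b (Set.Ioi b))
      (nhdsWithin 0 (Set.Ioi 0)) := by
    apply tendsto_nhdsWithin_of_tendsto_nhds_of_eventually_within
    · exact ((continuous_id.sub continuous_const).tendsto b).mono_left nhdsWithin_le_nhds
        |>.congr (fun x => rfl) |>.mono_right (by simp)
    · filter_upwards [self_mem_nhdsWithin] with x hx
      exact sub_pos.mpr (Set.mem_Ioi.mp hx)
  have hsqrt : Filter.Tendsto (fun x : ℝ => Real.sqrt (x - b)) (nhdsWithin b (Set.Ioi b))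
      (nhdsWithin 0 (Set.Ioi 0)) := by
    apply tendsto_nhdsWithin_of_tendsto_nhds_of_eventually_within
    · have := (Real.continuous_sqrt.tendsto 0).comp (h0.mono_right nhdsWithin_le_nhds)
      simpa [Function.comp_def] using this
    · filter_upwards [self_mem_nhdsWithin] with x hx
      exact Real.sqrt_pos.mpr (sub_pos.mpr (Set.mem_Ioi.mp hx))
  have harctan : Filter.Tendsto (fun x : ℝ => Real.arctan (Real.sqrt ε / Real.sqrt (x - b)))
      (nhdsWithin b (Set.Ioi b)) (nhds (Real.pi / 2)) := by
    have hinv : Filter.Tendsto (fun x : ℝ => (Real.sqrt (x - b))⁻¹)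
        (nhdsWithin b (Set.Ioi b)) Filter.atTop :=
      tendsto_inv_nhdsGT_zero.comp hsqrt
    have hdiv : Filter.Tendsto (fun x : ℝ => Real.sqrt ε / Real.sqrt (x - b))
        (nhdsWithin b (Set.Ioi b)) Filter.atTop := by
      simp only [div_eq_mul_inv]
      exact hinv.const_mul_atTop (Real.sqrt_pos.mpr hε)
    exact (Real.tendsto_arctan_atTop.mono_right nhdsWithin_le_nhds).comp hdiv
  have hsecond : Filter.Tendsto
      (fun x : ℝ => Real.sqrt (x - b) * (Real.sqrt ε / ((x - b) + ε)))
      (nhdsWithin b (Set.Ioi b)) (nhds 0) := by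
    have h1 : Filter.Tendsto (fun x : ℝ => Real.sqrt (x - b)) (nhdsWithin b (Set.Ioi b))
        (nhds 0) := hsqrt.mono_right nhdsWithin_le_nhds
    have h2 : Filter.Tendsto (fun x : ℝ => Real.sqrt ε / ((x - b) + ε))
        (nhdsWithin b (Set.Ioi b)) (nhds (Real.sqrt ε / (0 + ε))) := by
      apply Filter.Tendsto.div tendsto_const_nhds
      · exact (h0.mono_right nhdsWithin_le_nhds).add tendsto_const_nhds
      · positivity
    simpa using h1.mul h2
  have := (harctan.sub hsecond).const_mul (α / Real.pi)
  convert this using 2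
  field_simp
  ring
end
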